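/- Let X₀ have density p₀ on ℝ^d with compact support, let g : ℝ^d → ℝ be bounded measurable, and let X_t = μ_t X₀ + σ_t ε with ε ∼ N(0, I_d) independent of X₀, with marginal density p_t. Define m(x) := E[g(X₀) | X_t = x] = ∫ g(x₀) φ_d(x; μ_t x₀, σ_t² I_d) p₀(x₀) dx₀ / p_t(x). Then m is differentiable and ∇m(x) = (μ_t/σ_t²) · Cov(X₀, g(X₀) | X_t = x), where the k-th entry of the conditional covariance is E[X_{0,k} g(X₀) | X_t = x] − E[X_{0,k} | X_t = x]·E[g(X₀) | X_t = x]. -/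

import Mathlib

open MeasureTheory Real

/-- The `d`-dimensional Gaussian density `φ_d(x; m, σ² I_d)`. -/
noncomputable def gaussKernel (d : ℕ) (σ2 : ℝ) (x m : Fin d → ℝ) : ℝ :=
  (2 * Real.pi * σ2) ^ (-(d : ℝ) / 2) *
    Real.exp (-(∑ i, (x i - m i) ^ 2) / (2 * σ2))

section aux

variable {d : ℕ}

noncomputable def gDeriv (d : ℕ) (σ2 : ℝ) (y m : Fin d → ℝ) : (Fin d → ℝ) →L[ℝ] ℝ :=
  ∑ i : Fin d, (gaussKernel d σ2 y m * (-((y i - m i) / σ2))) •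
      (ContinuousLinearMap.proj (R := ℝ) (φ := fun _ : Fin d => ℝ) i)

lemma gaussKernel_pos {σ2 : ℝ} (hσ2 : 0 < σ2) (y m : Fin d → ℝ) :
    0 < gaussKernel d σ2 y m := by
  have : (0:ℝ) < 2 * Real.pi * σ2 := by positivity
  exact mul_pos (Real.rpow_pos_of_pos this _) (Real.exp_pos _)

lemma gaussKernel_le {σ2 : ℝ} (hσ2 : 0 < σ2) (y m : Fin d → ℝ) :
    gaussKernel d σ2 y m ≤ (2 * Real.pi * σ2) ^ (-(d:ℝ)/2) := by
  have h1 : (0:ℝ) < 2 * Real.pi * σ2 := by positivity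
  have h2 : Real.exp (-(∑ i, (y i - m i) ^ 2) / (2 * σ2)) ≤ 1 := by
    rw [Real.exp_le_one_iff]
    apply div_nonpos_of_nonpos_of_nonneg
    · simp only [neg_nonpos]
      positivity
    · positivity
  calc gaussKernel d σ2 y m ≤ (2 * Real.pi * σ2) ^ (-(d:ℝ)/2) * 1 := by
        unfold gaussKernel
        exact mul_le_mul_of_nonneg_left h2 (le_of_lt (Real.rpow_pos_of_pos h1 _))
    _ = _ := mul_one _

lemma continuous_gaussKernel {σ2 : ℝ} (y : Fin d → ℝ) :
    Continuous (fun m : Fin d → ℝ => gaussKernel d σ2 y m) := by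
  unfold gaussKernel
  apply continuous_const.mul
  apply Real.continuous_exp.comp
  apply Continuous.div_const
  apply Continuous.neg
  exact continuous_finset_sum _ fun i _ =>
    ((continuous_const.sub (continuous_apply i)).pow 2)

lemma continuous_gDeriv {σ2 : ℝ} (y : Fin d → ℝ) :
    Continuous (fun m : Fin d → ℝ => gDeriv d σ2 y m) := by
  unfold gDeriv
  apply continuous_finset_sum
  intro i _
  exact Continuous.smul ((continuous_gaussKernel y).mul
    (((continuous_const.sub (continuous_apply i)).div_const σ2).neg))
    (continuous_const (y := (ContinuousLinearMap.proj (R := ℝ) (φ := fun _ : Fin d => ℝ) i)))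

lemma hasFDerivAt_gaussKernel {σ2 : ℝ} (hσ2 : 0 < σ2) (m y : Fin d → ℝ) :
    HasFDerivAt (fun z => gaussKernel d σ2 z m) (gDeriv d σ2 y m) y := by
  have hs : HasFDerivAt (fun z : Fin d → ℝ => ∑ i, (z i - m i) ^ 2)
      (∑ i : Fin d, (2 * (y i - m i)) •
        (ContinuousLinearMap.proj (R := ℝ) (φ := fun _ : Fin d => ℝ) i)) y := by
    apply HasFDerivAt.fun_sum
    intro i _
    have h1 : HasFDerivAt (fun z : Fin d → ℝ => z i - m i)
        (ContinuousLinearMap.proj (R := ℝ) (φ := fun _ : Fin d => ℝ) i) y :=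
      ((ContinuousLinearMap.proj (R := ℝ) (φ := fun _ : Fin d => ℝ) i).hasFDerivAt).sub_const _
    have h2 := h1.mul h1
    have heq : (fun z : Fin d → ℝ => (z i - m i) ^ 2)
        = fun z : Fin d → ℝ => (z i - m i) * (z i - m i) := by
      funext z; ring
    rw [heq, two_mul, add_smul]
    exact h2
  have hq : HasFDerivAt (fun z : Fin d → ℝ => -(∑ i, (z i - m i) ^ 2) / (2 * σ2))
      ((2 * σ2)⁻¹ • (-(∑ i : Fin d, (2 * (y i - m i)) •
        (ContinuousLinearMap.proj (R := ℝ) (φ := fun _ : Fin d => ℝ) i)))) y := by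
    have h := (hs.neg).const_mul ((2 * σ2)⁻¹)
    have hfe : (fun z : Fin d → ℝ => -(∑ i, (z i - m i) ^ 2) / (2 * σ2))
        = fun z : Fin d → ℝ => (2 * σ2)⁻¹ * (-(∑ i, (z i - m i) ^ 2)) := by
      funext z; rw [div_eq_inv_mul]
    rw [hfe]
    exact h
  have h3 := (hq.exp).const_mul ((2 * Real.pi * σ2) ^ (-(d:ℝ)/2))
  have heq2 : (fun z : Fin d → ℝ => (2 * Real.pi * σ2) ^ (-(d:ℝ)/2) *
      Real.exp (-(∑ i, (z i - m i) ^ 2) / (2 * σ2))) = fun z => gaussKernel d σ2 z m := rfl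
  rw [heq2] at h3
  apply h3.congr_fderiv
  ext v
  unfold gDeriv gaussKernel
  simp only [ContinuousLinearMap.smul_apply, ContinuousLinearMap.sum_apply,
    ContinuousLinearMap.neg_apply, ContinuousLinearMap.proj_apply, smul_eq_mul]
  simp only [← Finset.sum_neg_distrib, Finset.mul_sum]
  apply Finset.sum_congr rfl
  intro i _
  field_simp

lemma gDeriv_apply_single {σ2 : ℝ} (y m : Fin d → ℝ) (k : Fin d) :
    gDeriv d σ2 y m (Pi.single k 1) = gaussKernel d σ2 y m * (-((y k - m k) / σ2)) := by
  unfold gDeriv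
  simp only [ContinuousLinearMap.sum_apply, ContinuousLinearMap.smul_apply,
    ContinuousLinearMap.proj_apply, smul_eq_mul]
  rw [Finset.sum_eq_single k]
  · simp
  · intro i _ hik
    simp [Pi.single_apply, hik]
  · simp

lemma norm_gDeriv_le {σ2 : ℝ} (hσ2 : 0 < σ2) (y m : Fin d → ℝ) :
    ‖gDeriv d σ2 y m‖ ≤ gaussKernel d σ2 y m * ∑ i : Fin d, |(y i - m i) / σ2| := by
  have hK : 0 < gaussKernel d σ2 y m := gaussKernel_pos hσ2 y m
  apply ContinuousLinearMap.opNorm_le_bound _ (by positivity)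
  intro v
  unfold gDeriv
  simp only [ContinuousLinearMap.sum_apply, ContinuousLinearMap.smul_apply,
    ContinuousLinearMap.proj_apply, smul_eq_mul]
  calc ‖∑ i : Fin d, gaussKernel d σ2 y m * -((y i - m i) / σ2) * v i‖
      ≤ ∑ i : Fin d, ‖gaussKernel d σ2 y m * -((y i - m i) / σ2) * v i‖ := norm_sum_le _ _
    _ ≤ ∑ i : Fin d, gaussKernel d σ2 y m * |(y i - m i) / σ2| * ‖v‖ := by
        apply Finset.sum_le_sum
        intro i _
        rw [Real.norm_eq_abs, abs_mul, abs_mul, abs_neg, abs_of_pos hK]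
        apply mul_le_mul_of_nonneg_left _ (by positivity)
        simpa using norm_le_pi_norm v i
    _ = gaussKernel d σ2 y m * (∑ i : Fin d, |(y i - m i) / σ2|) * ‖v‖ := by
        rw [← Finset.sum_mul, Finset.mul_sum]
lemma key {σ2 : ℝ} (hσ2 : 0 < σ2) (μt : ℝ) (f : (Fin d → ℝ) → ℝ)
    (hf : Measurable f) (hfs : HasCompactSupport f) (hfb : ∃ C, ∀ z, |f z| ≤ C)
    (x : Fin d → ℝ) :
    Integrable (fun x0 => f x0 * gaussKernel d σ2 x (μt • x0)) ∧
    Integrable (fun x0 => f x0 • gDeriv d σ2 x (μt • x0)) ∧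
    HasFDerivAt (fun y => ∫ x0, f x0 * gaussKernel d σ2 y (μt • x0))
      (∫ x0, f x0 • gDeriv d σ2 x (μt • x0)) x := by
  obtain ⟨C, hC⟩ := hfb
  have hC0 : 0 ≤ C := le_trans (abs_nonneg _) (hC 0)
  set c0 : ℝ := (2 * Real.pi * σ2) ^ (-(d:ℝ)/2) with hc0
  have hc0pos : 0 < c0 := Real.rpow_pos_of_pos (by positivity) _
  obtain ⟨R0, hR0⟩ := hfs.isBounded.exists_norm_le
  set R : ℝ := max R0 0 with hRdef
  have hR : ∀ z ∈ tsupport f, ‖z‖ ≤ R := fun z hz => (hR0 z hz).trans (le_max_left _ _)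
  have hRnn : (0:ℝ) ≤ R := le_max_right _ _
  set B : ℝ := (‖x‖ + 1 + |μt| * R) / σ2 with hB
  have hBnn : 0 ≤ B := by positivity
  set M : ℝ := C * (c0 * ((d:ℝ) * B)) with hM
  have hts_meas : MeasurableSet (tsupport f) := (isClosed_tsupport f).measurableSet
  have hcont_x0 : ∀ y : Fin d → ℝ,
      Continuous (fun x0 : Fin d → ℝ => gaussKernel d σ2 y (μt • x0)) := fun y =>
    (continuous_gaussKernel y).comp (continuous_const_smul μt)
  have hmeas : ∀ y : Fin d → ℝ,
      AEStronglyMeasurable (fun x0 => f x0 * gaussKernel d σ2 y (μt • x0)) volume := fun y =>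
    (hf.mul (hcont_x0 y).measurable).aestronglyMeasurable
  -- bound for the kernel integrand
  have hboundK : ∀ x0 : Fin d → ℝ,
      ‖f x0 * gaussKernel d σ2 x (μt • x0)‖ ≤ (tsupport f).indicator (fun _ => C * c0) x0 := by
    intro x0
    by_cases hx0 : x0 ∈ tsupport f
    · rw [Set.indicator_of_mem hx0, Real.norm_eq_abs, abs_mul,
        abs_of_pos (gaussKernel_pos hσ2 _ _)]
      exact mul_le_mul (hC x0) (gaussKernel_le hσ2 _ _) (le_of_lt (gaussKernel_pos hσ2 _ _)) hC0
    · rw [Set.indicator_of_notMem hx0, image_eq_zero_of_notMem_tsupport hx0]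
      simp
  have hbound_int1 : Integrable ((tsupport f).indicator (fun _ => C * c0)) volume := by
    rw [integrable_indicator_iff hts_meas]
    exact integrableOn_const hfs.measure_lt_top.ne
  have hFint : Integrable (fun x0 => f x0 * gaussKernel d σ2 x (μt • x0)) volume :=
    Integrable.mono' hbound_int1 (hmeas x) (Filter.Eventually.of_forall hboundK)
  -- bound for the derivative
  have hbound : ∀ x0 : Fin d → ℝ, ∀ y ∈ Metric.ball x 1,
      ‖f x0 • gDeriv d σ2 y (μt • x0)‖ ≤ (tsupport f).indicator (fun _ => M) x0 := by
    intro x0 y hy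
    by_cases hx0 : x0 ∈ tsupport f
    · rw [Set.indicator_of_mem hx0]
      refine le_trans (norm_smul_le (β := (Fin d → ℝ) →L[ℝ] ℝ) _ _) ?_
      rw [Real.norm_eq_abs]
      have hyn : ‖y‖ ≤ ‖x‖ + 1 := by
        have h2 : ‖y - x‖ < 1 := by
          rw [← dist_eq_norm]; exact Metric.mem_ball.1 hy
        calc ‖y‖ = ‖x + (y - x)‖ := by rw [add_sub_cancel]
          _ ≤ ‖x‖ + ‖y - x‖ := norm_add_le _ _
          _ ≤ ‖x‖ + 1 := by linarith
      have hterm : ∀ i : Fin d, |(y i - (μt • x0) i) / σ2| ≤ B := by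
        intro i
        rw [abs_div, abs_of_pos hσ2, hB]
        gcongr
        calc |y i - (μt • x0) i| ≤ |y i| + |(μt • x0) i| := abs_sub _ _
          _ ≤ (‖x‖ + 1) + |μt| * R := by
              apply add_le_add
              · calc |y i| = ‖y i‖ := (Real.norm_eq_abs _).symm
                  _ ≤ ‖y‖ := norm_le_pi_norm y i
                  _ ≤ ‖x‖ + 1 := hyn
              · show |(μt • x0) i| ≤ |μt| * R
                rw [Pi.smul_apply, smul_eq_mul, abs_mul]
                apply mul_le_mul_of_nonneg_left _ (abs_nonneg μt)
                calc |x0 i| = ‖x0 i‖ := (Real.norm_eq_abs _).symm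
                  _ ≤ ‖x0‖ := norm_le_pi_norm x0 i
                  _ ≤ R := hR x0 hx0
      have hsum : (∑ i : Fin d, |(y i - (μt • x0) i) / σ2|) ≤ (d:ℝ) * B := by
        calc (∑ i : Fin d, |(y i - (μt • x0) i) / σ2|) ≤ ∑ _i : Fin d, B :=
              Finset.sum_le_sum fun i _ => hterm i
          _ = (d:ℝ) * B := by
              rw [Finset.sum_const, Finset.card_univ, Fintype.card_fin, nsmul_eq_mul]
      have hgd : ‖gDeriv d σ2 y (μt • x0)‖ ≤ c0 * ((d:ℝ) * B) := by
        calc ‖gDeriv d σ2 y (μt • x0)‖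
            ≤ gaussKernel d σ2 y (μt • x0) * ∑ i : Fin d, |(y i - (μt • x0) i) / σ2| :=
              norm_gDeriv_le hσ2 _ _
          _ ≤ c0 * ((d:ℝ) * B) := by
              apply mul_le_mul (gaussKernel_le hσ2 _ _) hsum
                (Finset.sum_nonneg fun i _ => abs_nonneg _) (le_of_lt hc0pos)
      exact mul_le_mul (hC x0) hgd (norm_nonneg _) hC0
    · rw [Set.indicator_of_notMem hx0, image_eq_zero_of_notMem_tsupport hx0]
      simp
  have hbound_int : Integrable ((tsupport f).indicator (fun _ => M)) volume := by
    rw [integrable_indicator_iff hts_meas]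
    exact integrableOn_const hfs.measure_lt_top.ne
  have hF'meas : ∀ y : Fin d → ℝ,
      AEStronglyMeasurable (fun x0 => f x0 • gDeriv d σ2 y (μt • x0)) volume := by
    intro y
    exact AEStronglyMeasurable.smul hf.aestronglyMeasurable
      (((continuous_gDeriv y).comp (continuous_const_smul μt)).aestronglyMeasurable)
  have hF'int : Integrable (fun x0 => f x0 • gDeriv d σ2 x (μt • x0)) volume :=
    Integrable.mono' hbound_int (hF'meas x)
      (Filter.Eventually.of_forall fun x0 => hbound x0 x (Metric.mem_ball_self one_pos))
  have h_diff : ∀ x0 : Fin d → ℝ, ∀ y ∈ Metric.ball x 1,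
      HasFDerivAt (fun y => f x0 * gaussKernel d σ2 y (μt • x0))
        (f x0 • gDeriv d σ2 y (μt • x0)) y := fun x0 y _ =>
    (hasFDerivAt_gaussKernel hσ2 (μt • x0) y).const_mul (f x0)
  refine ⟨hFint, hF'int, ?_⟩
  exact hasFDerivAt_integral_of_dominated_of_fderiv_le
    (F := fun y x0 => f x0 * gaussKernel d σ2 y (μt • x0))
    (F' := fun y x0 => f x0 • gDeriv d σ2 y (μt • x0))
    (bound := (tsupport f).indicator (fun _ => M))
    (Metric.ball_mem_nhds x one_pos) (Filter.Eventually.of_forall hmeas) hFint (hF'meas x)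
    (Filter.Eventually.of_forall hbound) hbound_int
    (Filter.Eventually.of_forall h_diff)

end aux

/-- Gradient of a posterior expectation: with `X_t = μ_t X₀ + σ_t ε`, `X₀ ∼ p₀`
compactly supported, `g` bounded measurable, and
`m(x) = E[g(X₀) | X_t = x]` given by the Bayes-rule integral, `m` is differentiable
and `∇m(x) = (μ_t/σ_t²)·Cov(X₀, g(X₀) | X_t = x)`, coordinatewise. -/
theorem gradient_posterior_expectation_eq_cov
    {d : ℕ} (μt σt : ℝ) (hμt : 0 < μt) (hσt : 0 < σt)
    (p0 : (Fin d → ℝ) → ℝ) (hp0_cont : Continuous p0) (hp0_supp : HasCompactSupport p0)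
    (hp0_nonneg : ∀ x, 0 ≤ p0 x) (hp0_int : ∫ x, p0 x = 1)
    (g : (Fin d → ℝ) → ℝ) (hg_meas : Measurable g) (hg_bdd : ∃ C, ∀ x, |g x| ≤ C)
    (pt m : (Fin d → ℝ) → ℝ)
    (hpt : pt = fun x => ∫ x0, gaussKernel d (σt ^ 2) x (μt • x0) * p0 x0)
    (hm : m = fun x =>
      (∫ x0, g x0 * gaussKernel d (σt ^ 2) x (μt • x0) * p0 x0) / pt x)
    (x : Fin d → ℝ) :
    DifferentiableAt ℝ m x ∧
    ∀ k : Fin d,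
      fderiv ℝ m x (Pi.single k 1)
        = (μt / σt ^ 2) *
            ((∫ x0, x0 k * g x0 * gaussKernel d (σt ^ 2) x (μt • x0) * p0 x0) / pt x
              - ((∫ x0, x0 k * gaussKernel d (σt ^ 2) x (μt • x0) * p0 x0) / pt x)
                * ((∫ x0, g x0 * gaussKernel d (σt ^ 2) x (μt • x0) * p0 x0) / pt x)) := by
  have hσ2 : (0:ℝ) < σt ^ 2 := by positivity
  set σ2 : ℝ := σt ^ 2 with hσ2def
  obtain ⟨Cg0, hCg0⟩ := hg_bdd
  set Cg : ℝ := max Cg0 0 with hCgdef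
  have hCg : ∀ z, |g z| ≤ Cg := fun z => (hCg0 z).trans (le_max_left _ _)
  have hCgnn : 0 ≤ Cg := le_max_right _ _
  obtain ⟨Cp, hCp⟩ := hp0_supp.exists_bound_of_continuous hp0_cont
  have hCp' : ∀ z, |p0 z| ≤ Cp := fun z => by
    rw [← Real.norm_eq_abs]; exact hCp z
  have hCpnn : 0 ≤ Cp := le_trans (abs_nonneg _) (hCp' 0)
  obtain ⟨R0, hR0⟩ := hp0_supp.isBounded.exists_norm_le
  set R : ℝ := max R0 0 with hRdef
  have hR : ∀ z ∈ tsupport p0, ‖z‖ ≤ R := fun z hz => (hR0 z hz).trans (le_max_left _ _)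
  have hRnn : (0:ℝ) ≤ R := le_max_right _ _
  set f₂ : (Fin d → ℝ) → ℝ := fun z => g z * p0 z with hf₂def
  have hf₂m : Measurable f₂ := hg_meas.mul hp0_cont.measurable
  have hf₂s : HasCompactSupport f₂ := hp0_supp.mul_left
  have hf₂b : ∃ C, ∀ z, |f₂ z| ≤ C := ⟨Cg * Cp, fun z => by
    rw [hf₂def, abs_mul]
    exact mul_le_mul (hCg z) (hCp' z) (abs_nonneg _) hCgnn⟩
  have k1 := key hσ2 μt p0 hp0_cont.measurable hp0_supp ⟨Cp, hCp'⟩ x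
  have k2 := key hσ2 μt f₂ hf₂m hf₂s hf₂b x
  set Dfun : (Fin d → ℝ) → ℝ :=
    fun y => ∫ x0, p0 x0 * gaussKernel d σ2 y (μt • x0) with hDfundef
  set Nfun : (Fin d → ℝ) → ℝ :=
    fun y => ∫ x0, f₂ x0 * gaussKernel d σ2 y (μt • x0) with hNfundef
  have hptD : pt = Dfun := by
    rw [hpt, hDfundef]; funext y; congr 1; funext x0; ring
  have hmN : m = fun y => Nfun y * (Dfun y)⁻¹ := by
    rw [hm, hptD, hNfundef]
    funext y
    rw [div_eq_mul_inv]
    congr 1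
    congr 1
    funext x0
    rw [hf₂def]
    ring
  have hDpos : 0 < Dfun x := by
    have hnn : (0:(Fin d → ℝ) → ℝ) ≤ fun x0 => p0 x0 * gaussKernel d σ2 x (μt • x0) :=
      fun x0 => mul_nonneg (hp0_nonneg x0) (gaussKernel_pos hσ2 _ _).le
    rw [hDfundef]
    rw [integral_pos_iff_support_of_nonneg hnn k1.1]
    have hsupp : Function.support (fun x0 => p0 x0 * gaussKernel d σ2 x (μt • x0))
        = Function.support p0 := by
      ext z
      simp only [Function.mem_support]
      constructor
      · intro h hc; exact h (by rw [hc, zero_mul])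
      · intro h; exact mul_ne_zero h (ne_of_gt (gaussKernel_pos hσ2 _ _))
    rw [hsupp, pos_iff_ne_zero]
    intro h0
    have hae : p0 =ᵐ[volume] 0 := by
      rw [Filter.EventuallyEq, ae_iff]
      convert h0 using 2
      rfl
    have hzero : ∫ z, p0 z = 0 := by
      rw [integral_congr_ae hae]; simp
    rw [hp0_int] at hzero
    exact one_ne_zero hzero
  have hDne : Dfun x ≠ 0 := ne_of_gt hDpos
  have hD := k1.2.2
  have hN := k2.2.2
  have hinv := (hasDerivAt_inv hDne).hasFDerivAt.comp x hD
  have hm' := hN.mul hinv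
  simp only [Function.comp_apply] at hm'
  constructor
  · rw [hmN]; exact hm'.differentiableAt
  intro k
  -- integrability for the `x0 k`-weighted integrands
  have habs : ∀ z ∈ tsupport p0, |z k| ≤ R := fun z hz =>
    le_trans (by simpa using norm_le_pi_norm z k) (hR z hz)
  have hsub : Function.support f₂ ⊆ Function.support p0 := by
    intro z hz
    simp only [Function.mem_support, hf₂def] at hz ⊢
    intro hc; exact hz (by rw [hc, mul_zero])
  have k3 := key hσ2 μt (fun z => z k * p0 z)
    ((measurable_pi_apply k).mul hp0_cont.measurable)
    (hp0_supp.mul_left)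
    ⟨R * Cp, fun z => by
      show |z k * p0 z| ≤ R * Cp
      by_cases hz : z ∈ tsupport p0
      · rw [abs_mul]
        exact mul_le_mul (habs z hz) (hCp' z) (abs_nonneg _) hRnn
      · rw [image_eq_zero_of_notMem_tsupport hz, mul_zero, abs_zero]
        positivity⟩ x
  have k4 := key hσ2 μt (fun z => z k * f₂ z)
    ((measurable_pi_apply k).mul hf₂m)
    (hf₂s.mul_left)
    ⟨R * (Cg * Cp), fun z => by
      show |z k * f₂ z| ≤ R * (Cg * Cp)
      by_cases hz : z ∈ tsupport p0
      · rw [abs_mul]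
        refine mul_le_mul (habs z hz) ?_ (abs_nonneg _) hRnn
        simp only [hf₂def, abs_mul]
        exact mul_le_mul (hCg z) (hCp' z) (abs_nonneg _) hCgnn
      · have hp0z : p0 z = 0 := image_eq_zero_of_notMem_tsupport hz
        simp only [hf₂def, hp0z, mul_zero, abs_zero]
        positivity⟩ x
  -- formula for the applied derivative of such an integral
  have hap : ∀ (f : (Fin d → ℝ) → ℝ),
      Integrable (fun x0 => f x0 • gDeriv d σ2 x (μt • x0)) volume →
      Integrable (fun x0 => f x0 * gaussKernel d σ2 x (μt • x0)) volume →
      Integrable (fun x0 => (x0 k * f x0) * gaussKernel d σ2 x (μt • x0)) volume →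
      (∫ x0, f x0 • gDeriv d σ2 x (μt • x0)) (Pi.single k 1)
        = (-(x k)/σ2) * (∫ x0, f x0 * gaussKernel d σ2 x (μt • x0))
          + (μt/σ2) * (∫ x0, (x0 k * f x0) * gaussKernel d σ2 x (μt • x0)) := by
    intro f hint hint1 hint3
    rw [ContinuousLinearMap.integral_apply hint]
    have he : ∀ x0 : Fin d → ℝ, (f x0 • gDeriv d σ2 x (μt • x0)) (Pi.single k 1)
        = (-(x k)/σ2) * (f x0 * gaussKernel d σ2 x (μt • x0))
          + (μt/σ2) * ((x0 k * f x0) * gaussKernel d σ2 x (μt • x0)) := by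
      intro x0
      rw [ContinuousLinearMap.smul_apply, gDeriv_apply_single, smul_eq_mul,
        Pi.smul_apply, smul_eq_mul]
      field_simp
      ring
    simp_rw [he]
    rw [integral_add (hint1.const_mul _) (hint3.const_mul _),
      integral_const_mul, integral_const_mul]
  have hNk := hap f₂ k2.2.1 k2.1 k4.1
  have hDk := hap p0 k1.2.1 k1.1 k3.1
  -- the applied derivative of m
  have happly : fderiv ℝ m x (Pi.single k 1)
      = Nfun x * ((-(Dfun x ^ 2)⁻¹)
            * ((∫ x0, p0 x0 • gDeriv d σ2 x (μt • x0)) (Pi.single k 1)))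
        + (Dfun x)⁻¹ * ((∫ x0, f₂ x0 • gDeriv d σ2 x (μt • x0)) (Pi.single k 1)) := by
    rw [hmN, show (fun y => Nfun y * (Dfun y)⁻¹) = Nfun * (fun y => y⁻¹) ∘ Dfun from rfl, hm'.fderiv]
    simp only [ContinuousLinearMap.add_apply, ContinuousLinearMap.smul_apply,
      ContinuousLinearMap.comp_apply, ContinuousLinearMap.smulRight_apply,
      ContinuousLinearMap.one_apply, smul_eq_mul, Function.comp_apply, ContinuousLinearMap.toSpanSingleton_apply]
    ring
  rw [hptD]
  have hg1 : (∫ x0, x0 k * g x0 * gaussKernel d σ2 x (μt • x0) * p0 x0)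
      = ∫ x0, (x0 k * f₂ x0) * gaussKernel d σ2 x (μt • x0) := by
    congr 1; funext x0; rw [hf₂def]; ring
  have hg2 : (∫ x0, x0 k * gaussKernel d σ2 x (μt • x0) * p0 x0)
      = ∫ x0, (x0 k * p0 x0) * gaussKernel d σ2 x (μt • x0) := by
    congr 1; funext x0; ring
  have hg3 : (∫ x0, g x0 * gaussKernel d σ2 x (μt • x0) * p0 x0) = Nfun x := by
    rw [hNfundef]; congr 1; funext x0; rw [hf₂def]; ring
  rw [hg1, hg2, hg3, happly, hNk, hDk]
  have hNxeq : Nfun x = ∫ x0, f₂ x0 * gaussKernel d σ2 x (μt • x0) := rfl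
  rw [← hNxeq]
  field_simp
  ring
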